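/- Let A ∈ ℝ^{m×n}, b ∈ ℝ^m, x^0 with A x^0 = b, and let M ∈ ℝ^{n×n} be symmetric positive semidefinite and positive definite on ker(A). Let f : ℝ^n → ℝ be differentiable and satisfy f(y) ≤ f(x) + ⟨∇f(x), y − x⟩ + ½ (y−x)^T M (y−x) for all x, y ∈ x^0 + ker(A). Let S_1, …, S_N be sketch matrices with probabilities P_1, …, P_N summing to 1 and Z = Σ_{i=1}^N P_i Z_{S_i}. Then for every x ∈ x^0 + ker(A): (i) for each i, f(x − Z_{S_i} ∇f(x)) ≤ f(x) − ½ ∇f(x)^T Z_{S_i} ∇f(x); and (ii) the expected value after one random sketch step satisfies Σ_{i=1}^N P_i f(x − Z_{S_i} ∇f(x)) ≤ f(x) − ½ ∇f(x)^T Z ∇f(x). -/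

import Mathlib

open Matrix

section MP
variable {k l : Type*} [Fintype k] [Fintype l]

def Penrose (B : Matrix k l ℝ) (X : Matrix l k ℝ) : Prop :=
  B * X * B = B ∧ X * B * X = X ∧ (B * X)ᵀ = B * X ∧ (X * B)ᵀ = X * B

lemma penrose_unique {B : Matrix k l ℝ} {X Y : Matrix l k ℝ}
    (hX : Penrose B X) (hY : Penrose B Y) : X = Y := by
  obtain ⟨hX1, hX2, hX3, hX4⟩ := hX
  obtain ⟨hY1, hY2, hY3, hY4⟩ := hY
  have e1 : X = X * B * Y := by
    calc X = X * B * X := hX2.symm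
    _ = X * (B * X)ᵀ := by rw [hX3]; simp only [Matrix.mul_assoc]
    _ = X * Xᵀ * Bᵀ := by rw [Matrix.transpose_mul, Matrix.mul_assoc]
    _ = X * Xᵀ * (B * Y * B)ᵀ := by rw [hY1]
    _ = X * Xᵀ * (Bᵀ * (B * Y)ᵀ) := by rw [Matrix.transpose_mul]
    _ = X * (B * X)ᵀ * (B * Y) := by
        rw [hY3, Matrix.transpose_mul]
        simp only [Matrix.mul_assoc]
    _ = X * B * X * (B * Y) := by rw [hX3]; simp only [Matrix.mul_assoc]
    _ = X * B * Y := by rw [hX2]; simp only [Matrix.mul_assoc]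
  have e2 : Y = X * B * Y := by
    calc Y = Y * B * Y := hY2.symm
    _ = (Y * B)ᵀ * Y := by rw [hY4]
    _ = Bᵀ * Yᵀ * Y := by rw [Matrix.transpose_mul]
    _ = (B * X * B)ᵀ * Yᵀ * Y := by rw [hX1]
    _ = (X * B)ᵀ * ((Y * B)ᵀ * Y) := by
        simp only [Matrix.transpose_mul, Matrix.mul_assoc]
    _ = X * B * (Y * B * Y) := by
        rw [hX4, hY4]
    _ = X * B * Y := by rw [hY2]
  rw [e1, ← e2]

/-- Pseudoinverse of a symmetric real matrix, via the spectral theorem. -/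
lemma exists_penrose_symm [DecidableEq l] (C : Matrix l l ℝ) (hC : Cᵀ = C) :
    ∃ G : Matrix l l ℝ, Penrose C G ∧ Gᵀ = G := by
  have hherm : C.IsHermitian := by
    rw [Matrix.IsHermitian, Matrix.conjTranspose_eq_transpose_of_trivial]
    exact hC
  set U : Matrix l l ℝ := (hherm.eigenvectorUnitary : Matrix l l ℝ) with hU
  have hstar : star U = Uᵀ := by
    rw [Matrix.star_eq_conjTranspose, Matrix.conjTranspose_eq_transpose_of_trivial]
  have hUU : Uᵀ * U = 1 := by rw [← hstar]; exact Unitary.coe_star_mul_self _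
  set d : l → ℝ := fun i => hherm.eigenvalues i with hd
  have hspec : C = U * Matrix.diagonal d * Uᵀ := by
    rw [← hstar]
    convert hherm.spectral_theorem using 2
    rw [Unitary.conjStarAlgAut_apply]
    rfl
  set G : Matrix l l ℝ := U * Matrix.diagonal (fun i => (d i)⁻¹) * Uᵀ with hG
  have key : ∀ (a b : l → ℝ),
      (U * Matrix.diagonal a * Uᵀ) * (U * Matrix.diagonal b * Uᵀ)
      = U * Matrix.diagonal (fun i => a i * b i) * Uᵀ := by
    intro a b
    calc (U * Matrix.diagonal a * Uᵀ) * (U * Matrix.diagonal b * Uᵀ)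
        = U * Matrix.diagonal a * (Uᵀ * U) * (Matrix.diagonal b * Uᵀ) := by
          simp only [Matrix.mul_assoc]
      _ = U * (Matrix.diagonal a * Matrix.diagonal b) * Uᵀ := by
          rw [hUU]; simp only [Matrix.mul_one, Matrix.mul_assoc]
      _ = U * Matrix.diagonal (fun i => a i * b i) * Uᵀ := by
          rw [Matrix.diagonal_mul_diagonal]
  have tkey : ∀ (a : l → ℝ),
      (U * Matrix.diagonal a * Uᵀ)ᵀ = U * Matrix.diagonal a * Uᵀ := by
    intro a
    simp only [Matrix.transpose_mul, Matrix.transpose_transpose,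
      Matrix.diagonal_transpose, Matrix.mul_assoc]
  have hdd : (fun i => d i * (d i)⁻¹ * d i) = d := by
    funext i
    by_cases h : d i = 0
    · simp [h]
    · field_simp
  have hdd' : (fun i => (d i)⁻¹ * d i * (d i)⁻¹) = fun i => (d i)⁻¹ := by
    funext i
    by_cases h : d i = 0
    · simp [h]
    · field_simp
  refine ⟨G, ⟨?_, ?_, ?_, ?_⟩, ?_⟩
  · rw [hspec, hG, key, key, hdd]
  · rw [hspec, hG, key, key, hdd']
  · rw [hspec, hG, key]; exact tkey _
  · rw [hspec, hG, key]; exact tkey _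
  · rw [hG]; exact tkey _

lemma exists_penrose (B : Matrix k l ℝ) : ∃ X : Matrix l k ℝ, Penrose B X := by
  classical
  obtain ⟨G, ⟨hG1, hG2, hG3, hG4⟩, hGs⟩ :=
    exists_penrose_symm (Bᵀ * B) (by rw [Matrix.transpose_mul, Matrix.transpose_transpose])
  have key : B * G * (Bᵀ * B) = B := by
    have ht : (B * G * (Bᵀ * B) - B)ᵀ = Bᵀ * B * G * Bᵀ - Bᵀ := by
      simp only [Matrix.transpose_sub, Matrix.transpose_mul, hGs,
        Matrix.transpose_transpose]
      simp only [Matrix.mul_assoc]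
    have hz : (B * G * (Bᵀ * B) - B)ᵀ * (B * G * (Bᵀ * B) - B) = 0 := by
      rw [ht]
      have h1 : Bᵀ * B * G * Bᵀ * (B * G * (Bᵀ * B)) = Bᵀ * B := by
        calc Bᵀ * B * G * Bᵀ * (B * G * (Bᵀ * B))
            = (Bᵀ * B) * G * (Bᵀ * B) * G * (Bᵀ * B) := by simp only [Matrix.mul_assoc]
          _ = Bᵀ * B := by rw [hG1, hG1]
      have h2 : Bᵀ * B * G * Bᵀ * B = Bᵀ * B := by
        calc Bᵀ * B * G * Bᵀ * B = (Bᵀ * B) * G * (Bᵀ * B) := by simp only [Matrix.mul_assoc]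
          _ = Bᵀ * B := hG1
      have h3 : Bᵀ * (B * G * (Bᵀ * B)) = Bᵀ * B := by
        calc Bᵀ * (B * G * (Bᵀ * B)) = (Bᵀ * B) * G * (Bᵀ * B) := by
              simp only [Matrix.mul_assoc]
          _ = Bᵀ * B := hG1
      rw [Matrix.sub_mul, Matrix.mul_sub, Matrix.mul_sub]
      rw [h1, h2, h3]
      abel
    have hz' : (B * G * (Bᵀ * B) - B)ᴴ * (B * G * (Bᵀ * B) - B) = 0 := by
      have : (B * G * (Bᵀ * B) - B)ᴴ = (B * G * (Bᵀ * B) - B)ᵀ := by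
        rw [Matrix.conjTranspose_eq_transpose_of_trivial]
      rw [this, hz]
    exact sub_eq_zero.mp (Matrix.conjTranspose_mul_self_eq_zero.mp hz')
  refine ⟨G * Bᵀ, ?_, ?_, ?_, ?_⟩
  · calc B * (G * Bᵀ) * B = B * G * (Bᵀ * B) := by simp only [Matrix.mul_assoc]
      _ = B := key
  · calc G * Bᵀ * B * (G * Bᵀ) = G * (Bᵀ * B) * G * Bᵀ := by simp only [Matrix.mul_assoc]
      _ = G * Bᵀ := by rw [hG2]
  · calc (B * (G * Bᵀ))ᵀ = B * G * Bᵀ := by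
          simp only [Matrix.transpose_mul, Matrix.transpose_transpose, hGs, Matrix.mul_assoc]
      _ = B * (G * Bᵀ) := by rw [Matrix.mul_assoc]
  · calc (G * Bᵀ * B)ᵀ = (G * (Bᵀ * B))ᵀ := by rw [Matrix.mul_assoc]
      _ = G * (Bᵀ * B) := hG4
      _ = G * Bᵀ * B := by rw [Matrix.mul_assoc]
end MP

open Classical in
noncomputable def mpinv {k l : Type*} [Fintype k] [Fintype l] (B : Matrix k l ℝ) :
    Matrix l k ℝ :=
  if h : ∃ X : Matrix l k ℝ,
      B * X * B = B ∧ X * B * X = X ∧ (B * X)ᵀ = B * X ∧ (X * B)ᵀ = X * B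
  then h.choose else 0

lemma mpinv_penrose {k l : Type*} [Fintype k] [Fintype l] (B : Matrix k l ℝ) :
    Penrose B (mpinv B) := by
  have h : ∃ X : Matrix l k ℝ,
      B * X * B = B ∧ X * B * X = X ∧ (B * X)ᵀ = B * X ∧ (X * B)ᵀ = X * B :=
    exists_penrose B
  rw [mpinv, dif_pos h]
  exact h.choose_spec

lemma mpinv_symm {l : Type*} [Fintype l] (C : Matrix l l ℝ) (hC : Cᵀ = C) :
    (mpinv C)ᵀ = mpinv C := by
  have hX := mpinv_penrose C
  obtain ⟨h1, h2, h3, h4⟩ := hX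
  set X := mpinv C with hXdef
  have hXt : Penrose C Xᵀ := by
    have hcx : C * Xᵀ = X * C := by
      calc C * Xᵀ = (X * Cᵀ)ᵀ := by rw [Matrix.transpose_mul, Matrix.transpose_transpose]
        _ = (X * C)ᵀ := by rw [hC]
        _ = X * C := h4
    have hxc : Xᵀ * C = C * X := by
      calc Xᵀ * C = (Cᵀ * X)ᵀ := by rw [Matrix.transpose_mul, Matrix.transpose_transpose]
        _ = (C * X)ᵀ := by rw [hC]
        _ = C * X := h3
    refine ⟨?_, ?_, ?_, ?_⟩
    · calc C * Xᵀ * C = (Cᵀ * X * Cᵀ)ᵀ := by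
            simp only [Matrix.transpose_mul, Matrix.transpose_transpose, Matrix.mul_assoc]
        _ = (C * X * C)ᵀ := by rw [hC]
        _ = Cᵀ := by rw [h1]
        _ = C := hC
    · calc Xᵀ * C * Xᵀ = (X * Cᵀ * X)ᵀ := by
            simp only [Matrix.transpose_mul, Matrix.transpose_transpose, Matrix.mul_assoc]
        _ = (X * C * X)ᵀ := by rw [hC]
        _ = Xᵀ := by rw [h2]
    · calc (C * Xᵀ)ᵀ = X * Cᵀ := by
            rw [Matrix.transpose_mul, Matrix.transpose_transpose]
        _ = X * C := by rw [hC]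
        _ = C * Xᵀ := hcx.symm
    · calc (Xᵀ * C)ᵀ = Cᵀ * X := by
            rw [Matrix.transpose_mul, Matrix.transpose_transpose]
        _ = C * X := by rw [hC]
        _ = Xᵀ * C := hxc.symm
  exact penrose_unique hXt (mpinv_penrose C)

/-- `P_S = I - (AS)†(AS)`, the orthogonal projection onto `ker(AS)`. -/
noncomputable def Pmat {m n p : ℕ} (A : Matrix (Fin m) (Fin n) ℝ)
    (S : Matrix (Fin n) (Fin p) ℝ) : Matrix (Fin p) (Fin p) ℝ :=
  1 - mpinv (A * S) * (A * S)

/-- `Z_S = S P_S (P_Sᵀ Sᵀ M S P_S)† P_Sᵀ Sᵀ`. -/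
noncomputable def Zmat {m n p : ℕ} (A : Matrix (Fin m) (Fin n) ℝ)
    (M : Matrix (Fin n) (Fin n) ℝ) (S : Matrix (Fin n) (Fin p) ℝ) :
    Matrix (Fin n) (Fin n) ℝ :=
  S * Pmat A S * mpinv ((Pmat A S)ᵀ * Sᵀ * M * S * Pmat A S) * (Pmat A S)ᵀ * Sᵀ

/-- The gradient of `f : ℝ^n → ℝ`, as a vector of partial derivatives. -/
noncomputable def gradv {n : ℕ} (f : (Fin n → ℝ) → ℝ) (x : Fin n → ℝ) : Fin n → ℝ :=
  fun i => fderiv ℝ f x (Pi.single i 1)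

/-- one-step decrease of the objective for the sketch-descent update,
both per-sample and in expectation. -/
theorem stmt5 {m n N : ℕ} (A : Matrix (Fin m) (Fin n) ℝ) (b : Fin m → ℝ)
    (x0 : Fin n → ℝ) (hx0 : A.mulVec x0 = b)
    (M : Matrix (Fin n) (Fin n) ℝ) (hM : M.PosSemidef)
    (hMpd : ∀ u : Fin n → ℝ, A.mulVec u = 0 → u ≠ 0 → 0 < u ⬝ᵥ M.mulVec u)
    (f : (Fin n → ℝ) → ℝ) (hdiff : Differentiable ℝ f)
    (hsmooth : ∀ x y : Fin n → ℝ, A.mulVec x = b → A.mulVec y = b →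
      f y ≤ f x + gradv f x ⬝ᵥ (y - x) + (1 / 2) * ((y - x) ⬝ᵥ M.mulVec (y - x)))
    (p : Fin N → ℕ) (S : ∀ i : Fin N, Matrix (Fin n) (Fin (p i)) ℝ)
    (P : Fin N → ℝ) (hP : ∀ i, 0 ≤ P i) (hPsum : ∑ i, P i = 1)
    (Z : Matrix (Fin n) (Fin n) ℝ) (hZ : Z = ∑ i, P i • Zmat A M (S i))
    (x : Fin n → ℝ) (hx : A.mulVec x = b) :
    (∀ i : Fin N,
        f (x - (Zmat A M (S i)).mulVec (gradv f x)) ≤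
          f x - (1 / 2) * (gradv f x ⬝ᵥ (Zmat A M (S i)).mulVec (gradv f x))) ∧
      ∑ i, P i * f (x - (Zmat A M (S i)).mulVec (gradv f x)) ≤
        f x - (1 / 2) * (gradv f x ⬝ᵥ Z.mulVec (gradv f x)) := by
  set g : Fin n → ℝ := gradv f x with hg
  have hMsym : Mᵀ = M := by
    have h := hM.1
    rwa [Matrix.IsHermitian, Matrix.conjTranspose_eq_transpose_of_trivial] at h
  have key : ∀ i : Fin N,
      f (x - (Zmat A M (S i)).mulVec g) ≤
        f x - (1 / 2) * (g ⬝ᵥ (Zmat A M (S i)).mulVec g) := by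
    intro i
    set Sm := S i with hSm
    set Pm := Pmat A Sm with hPm
    set K := mpinv (Pmᵀ * Smᵀ * M * Sm * Pm) with hKdef
    have hZeq : Zmat A M Sm = Sm * Pm * K * Pmᵀ * Smᵀ := rfl
    have hpen := mpinv_penrose (A * Sm)
    have hASP : A * Sm * Pm = 0 := by
      rw [hPm, Pmat, Matrix.mul_sub, Matrix.mul_one, ← Matrix.mul_assoc, hpen.1, sub_self]
    have hAZ : A * Zmat A M Sm = 0 := by
      rw [hZeq]
      calc A * (Sm * Pm * K * Pmᵀ * Smᵀ)
          = (A * Sm * Pm) * (K * (Pmᵀ * Smᵀ)) := by simp only [Matrix.mul_assoc]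
        _ = 0 := by rw [hASP, Matrix.zero_mul]
    have hfeas : A.mulVec (x - (Zmat A M Sm).mulVec g) = b := by
      rw [Matrix.mulVec_sub, hx, Matrix.mulVec_mulVec, hAZ, Matrix.zero_mulVec, sub_zero]
    have hWsym : (Pmᵀ * Smᵀ * M * Sm * Pm)ᵀ = Pmᵀ * Smᵀ * M * Sm * Pm := by
      simp only [Matrix.transpose_mul, Matrix.transpose_transpose, hMsym, Matrix.mul_assoc]
    have hKsym : Kᵀ = K := mpinv_symm _ hWsym
    have hKWK : K * (Pmᵀ * Smᵀ * M * Sm * Pm) * K = K := (mpinv_penrose _).2.1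
    have hZsym : (Zmat A M Sm)ᵀ = Zmat A M Sm := by
      rw [hZeq]
      simp only [Matrix.transpose_mul, Matrix.transpose_transpose, hKsym, Matrix.mul_assoc]
    have hZMZ : Zmat A M Sm * M * Zmat A M Sm = Zmat A M Sm := by
      rw [hZeq]
      calc Sm * Pm * K * Pmᵀ * Smᵀ * M * (Sm * Pm * K * Pmᵀ * Smᵀ)
          = Sm * Pm * (K * (Pmᵀ * Smᵀ * M * Sm * Pm) * K) * Pmᵀ * Smᵀ := by
            simp only [Matrix.mul_assoc]
        _ = Sm * Pm * K * Pmᵀ * Smᵀ := by rw [hKWK]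
    set Zi := Zmat A M Sm with hZi
    have hquad : Zi.mulVec g ⬝ᵥ M.mulVec (Zi.mulVec g) = g ⬝ᵥ Zi.mulVec g := by
      calc Zi *ᵥ g ⬝ᵥ M *ᵥ (Zi *ᵥ g)
          = Zi *ᵥ g ⬝ᵥ (M * Zi) *ᵥ g := by rw [Matrix.mulVec_mulVec]
        _ = (g ᵥ* Ziᵀ) ⬝ᵥ (M * Zi) *ᵥ g := by rw [Matrix.vecMul_transpose]
        _ = (g ᵥ* Ziᵀ) ᵥ* (M * Zi) ⬝ᵥ g := by rw [Matrix.dotProduct_mulVec]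
        _ = g ᵥ* (Ziᵀ * (M * Zi)) ⬝ᵥ g := by rw [Matrix.vecMul_vecMul]
        _ = g ᵥ* Zi ⬝ᵥ g := by rw [hZsym, ← Matrix.mul_assoc, hZMZ]
        _ = g ⬝ᵥ Zi *ᵥ g := by rw [← Matrix.dotProduct_mulVec]
    have hs := hsmooth x (x - Zi.mulVec g) hx hfeas
    have hd1 : x - Zi.mulVec g - x = -(Zi.mulVec g) := by abel
    rw [hd1, Matrix.mulVec_neg, neg_dotProduct_neg, dotProduct_neg, hquad] at hs
    linarith
  refine ⟨key, ?_⟩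
  have hsumq : g ⬝ᵥ Z.mulVec g = ∑ i, P i * (g ⬝ᵥ (Zmat A M (S i)).mulVec g) := by
    rw [hZ]
    have φdef : ∀ (Q : Matrix (Fin n) (Fin n) ℝ) (R : Matrix (Fin n) (Fin n) ℝ),
      (Q + R) *ᵥ g = Q *ᵥ g + R *ᵥ g := fun Q R => Matrix.add_mulVec Q R g
    have h1 : (∑ i, P i • Zmat A M (S i)) *ᵥ g = ∑ i, P i • (Zmat A M (S i) *ᵥ g) := by
      have := map_sum
        (⟨⟨fun Q : Matrix (Fin n) (Fin n) ℝ => Q *ᵥ g, Matrix.zero_mulVec g⟩, φdef⟩ :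
          Matrix (Fin n) (Fin n) ℝ →+ (Fin n → ℝ))
        (fun i => P i • Zmat A M (S i)) Finset.univ
      simp only [AddMonoidHom.coe_mk, ZeroHom.coe_mk] at this
      rw [this]
      exact Finset.sum_congr rfl fun i _ => Matrix.smul_mulVec (P i) _ g
    rw [h1]
    have h2 := map_sum
      (⟨⟨fun v : Fin n → ℝ => g ⬝ᵥ v, dotProduct_zero g⟩,
        fun v w => dotProduct_add g v w⟩ : (Fin n → ℝ) →+ ℝ)
      (fun i => P i • (Zmat A M (S i) *ᵥ g)) Finset.univ
    simp only [AddMonoidHom.coe_mk, ZeroHom.coe_mk] at h2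
    rw [h2]
    refine Finset.sum_congr rfl fun i _ => ?_
    rw [dotProduct_smul]
    simp [smul_eq_mul]
  calc ∑ i, P i * f (x - (Zmat A M (S i)).mulVec g)
      ≤ ∑ i, P i * (f x - (1 / 2) * (g ⬝ᵥ (Zmat A M (S i)).mulVec g)) := by
        refine Finset.sum_le_sum fun i _ => ?_
        exact mul_le_mul_of_nonneg_left (key i) (hP i)
    _ = f x - (1 / 2) * (g ⬝ᵥ Z.mulVec g) := by
        simp only [mul_sub, Finset.sum_sub_distrib, ← Finset.sum_mul, hPsum, one_mul]
        rw [hsumq, Finset.mul_sum]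
        congr 1
        refine Finset.sum_congr rfl fun i _ => ?_
        ring
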